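/- Let U ≥ 0 be a real number. For every real ν ≥ 0 and every real z with 0 < z < 2^{U+1}, the exponentially scaled modified Bessel function satisfies e^z·K_ν(z) > √(π/(2z + 1/2)) > 2^{−(U+1)/2}. (Hence, in a floating-point system with smallest exponent L ≤ −(U+1)/2, the exponentially scaled function e^z·K_ν(z) never underflows.) -/

import Mathlib

set_option maxHeartbeats 1000000

open Real MeasureTheory

private lemma sqrt_one_add_sinh_sq (x : ℝ) :
    Real.sqrt (1 + Real.sinh x ^ 2) = Real.cosh x := by
  rw [← Real.cosh_sq']
  exact Real.sqrt_sq (Real.cosh_pos x).le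

private lemma cosh_eq_one_add_two_sinh_sq (x : ℝ) :
    Real.cosh (2 * x) = 1 + 2 * Real.sinh x ^ 2 := by
  rw [Real.cosh_two_mul, Real.cosh_sq']; ring

private lemma exp_sq_helper (a : ℝ) : Real.exp a ^ 2 = Real.exp (2 * a) := by
  rw [sq, ← Real.exp_add, two_mul]

private lemma sq_div_eight_le_cosh (t : ℝ) (ht : 0 ≤ t) : t ^ 2 / 8 ≤ Real.cosh t := by
  have h1 : (t / 2) + 1 ≤ Real.exp (t / 2) := Real.add_one_le_exp _
  have h2 : Real.exp (t / 2) * Real.exp (t / 2) = Real.exp t := by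
    rw [← Real.exp_add]; ring_nf
  have h3 : 0 < Real.exp (-t) := Real.exp_pos _
  rw [Real.cosh_eq]
  nlinarith [Real.exp_pos (t / 2)]

private lemma exponent_le (ν z t : ℝ) (hz : 0 < z) (ht : 0 ≤ t) :
    ν * t - z * Real.cosh t ≤ 2 * (ν + 1) ^ 2 / z - t := by
  have hc : t ^ 2 / 8 ≤ Real.cosh t := sq_div_eight_le_cosh t ht
  have hzc : z * (t ^ 2 / 8) ≤ z * Real.cosh t := by nlinarith
  have hB : z * (2 * (ν + 1) ^ 2 / z) = 2 * (ν + 1) ^ 2 := by field_simp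
  nlinarith [sq_nonneg (z * t / 2 - 2 * (ν + 1)), mul_pos hz hz]

private lemma key_subst (z t : ℝ) :
    2 * Real.exp (-z * (1 + 2 * Real.sinh (t / 2) ^ 2)) /
        Real.sqrt (1 + Real.sinh (t / 2) ^ 2) * (Real.cosh (t / 2) / 2)
      = Real.exp (-z * Real.cosh t) := by
  have h1 : Real.cosh t = 1 + 2 * Real.sinh (t / 2) ^ 2 := by
    have := cosh_eq_one_add_two_sinh_sq (t / 2)
    rwa [mul_div_cancel₀ _ (two_ne_zero)] at this
  rw [sqrt_one_add_sinh_sq, h1]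
  have hc : Real.cosh (t / 2) ≠ 0 := (Real.cosh_pos _).ne'
  field_simp

private lemma exp_mul_g (z s : ℝ) :
    Real.exp z * (2 * Real.exp (-z * (1 + 2 * s ^ 2)) / Real.sqrt (1 + s ^ 2))
      = 2 * Real.exp (-(2 * z) * s ^ 2) / Real.sqrt (1 + s ^ 2) := by
  rw [mul_div_assoc', ← mul_assoc, mul_comm (Real.exp z) 2, mul_assoc, ← Real.exp_add,
    show z + -z * (1 + 2 * s ^ 2) = -(2 * z) * s ^ 2 by ring]

private lemma sqrt_le_exp_half_sq (s : ℝ) :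
    Real.sqrt (1 + s ^ 2) ≤ Real.exp (s ^ 2 / 2) := by
  rw [show Real.exp (s ^ 2 / 2) = Real.sqrt (Real.exp (s ^ 2)) from ?_]
  · exact Real.sqrt_le_sqrt (by linarith [Real.add_one_le_exp (s ^ 2)])
  · rw [show Real.exp (s ^ 2) = Real.exp (s ^ 2 / 2) ^ 2 by
      rw [exp_sq_helper]; congr 1; ring]
    exact (Real.sqrt_sq (Real.exp_pos _).le).symm

private lemma sqrt_lt_exp_half_sq (s : ℝ) (hs : s ≠ 0) :
    Real.sqrt (1 + s ^ 2) < Real.exp (s ^ 2 / 2) := by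
  rw [Real.sqrt_lt' (Real.exp_pos _), exp_sq_helper,
    show 2 * (s ^ 2 / 2) = s ^ 2 by ring]
  have := Real.add_one_lt_exp (show s ^ 2 ≠ 0 by positivity)
  linarith

private lemma gauss_eq_div (z s : ℝ) :
    2 * Real.exp (-(2 * z + 1 / 2) * s ^ 2)
      = 2 * Real.exp (-(2 * z) * s ^ 2) / Real.exp (s ^ 2 / 2) := by
  rw [eq_div_iff (Real.exp_pos _).ne', mul_assoc, ← Real.exp_add,
    show -(2 * z + 1 / 2) * s ^ 2 + s ^ 2 / 2 = -(2 * z) * s ^ 2 by ring]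

/-- Modified Bessel function of the second kind, via its integral representation. -/
noncomputable def besselK (ν z : ℝ) : ℝ :=
  ∫ t in Set.Ioi (0 : ℝ), Real.exp (-z * Real.cosh t) * Real.cosh (ν * t)

theorem exp_scaled_no_underflow (U : ℝ) (hU : 0 ≤ U) (ν z : ℝ) (hν : 0 ≤ ν)
    (hz : 0 < z) (hz' : z < (2 : ℝ) ^ (U + 1)) :
    Real.exp z * besselK ν z > Real.sqrt (π / (2 * z + 1 / 2)) ∧
      Real.sqrt (π / (2 * z + 1 / 2)) > (2 : ℝ) ^ (-(U + 1) / 2) := by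
  constructor
  · -- main inequality
    -- integrability of the besselK integrand
    have hbound : ∀ t ∈ Set.Ioi (0 : ℝ),
        ‖Real.exp (-z * Real.cosh t) * Real.cosh (ν * t)‖
          ≤ Real.exp (2 * (ν + 1) ^ 2 / z) * Real.exp (-t) := by
      intro t ht
      have ht0 : 0 < t := ht
      have hch : (0:ℝ) < Real.cosh (ν * t) := Real.cosh_pos _
      rw [Real.norm_eq_abs, abs_of_pos (by positivity)]
      have h1 : Real.cosh (ν * t) ≤ Real.exp (ν * t) := by
        rw [Real.cosh_eq]
        have : Real.exp (-(ν * t)) ≤ Real.exp (ν * t) := by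
          apply Real.exp_le_exp.2; nlinarith
        linarith
      calc Real.exp (-z * Real.cosh t) * Real.cosh (ν * t)
          ≤ Real.exp (-z * Real.cosh t) * Real.exp (ν * t) := by
            gcongr
        _ = Real.exp (ν * t - z * Real.cosh t) := by
            rw [← Real.exp_add,
              show -z * Real.cosh t + ν * t = ν * t - z * Real.cosh t by ring]
        _ ≤ Real.exp (2 * (ν + 1) ^ 2 / z - t) :=
            Real.exp_le_exp.2 (exponent_le ν z t hz ht0.le)
        _ = Real.exp (2 * (ν + 1) ^ 2 / z) * Real.exp (-t) := by
            rw [← Real.exp_add, sub_eq_add_neg]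
    have hMint : IntegrableOn
        (fun t => Real.exp (2 * (ν + 1) ^ 2 / z) * Real.exp (-t)) (Set.Ioi (0:ℝ)) := by
      have := (exp_neg_integrableOn_Ioi (0:ℝ) one_pos)
      simpa [neg_mul, one_mul, IntegrableOn] using this.const_mul (Real.exp (2 * (ν + 1) ^ 2 / z))
    have hKint : IntegrableOn
        (fun t => Real.exp (-z * Real.cosh t) * Real.cosh (ν * t)) (Set.Ioi (0:ℝ)) := by
      refine hMint.mono' ?_ ?_
      · exact (Continuous.mul (by continuity) (by continuity)).aestronglyMeasurable
      · exact (MeasureTheory.ae_restrict_iff' measurableSet_Ioi).2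
          (Filter.Eventually.of_forall hbound)
    have h0int : IntegrableOn (fun t => Real.exp (-z * Real.cosh t)) (Set.Ioi (0:ℝ)) := by
      refine hKint.mono' (Continuous.aestronglyMeasurable (by continuity)) ?_
      refine (MeasureTheory.ae_restrict_iff' measurableSet_Ioi).2
        (Filter.Eventually.of_forall fun t ht => ?_)
      rw [Real.norm_eq_abs, abs_of_pos (Real.exp_pos _)]
      nlinarith [Real.one_le_cosh (ν * t), Real.exp_pos (-z * Real.cosh t)]
    -- besselK ≥ integral with cosh(ν t) replaced by 1
    have hmono : (∫ t in Set.Ioi (0:ℝ), Real.exp (-z * Real.cosh t)) ≤ besselK ν z := by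
      refine setIntegral_mono_on h0int hKint measurableSet_Ioi fun t ht => ?_
      nlinarith [Real.one_le_cosh (ν * t), Real.exp_pos (-z * Real.cosh t)]
    -- substitution s = sinh (t/2)
    have hgcont : Continuous
        (fun s : ℝ => 2 * Real.exp (-z * (1 + 2 * s ^ 2)) / Real.sqrt (1 + s ^ 2)) := by
      apply Continuous.div (by continuity)
      · exact Real.continuous_sqrt.comp (by continuity)
      · intro s
        positivity
    have hgint : MeasureTheory.Integrable
        (fun s : ℝ => 2 * Real.exp (-z * (1 + 2 * s ^ 2)) / Real.sqrt (1 + s ^ 2)) := by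
      have hmaj : MeasureTheory.Integrable
          (fun s : ℝ => (2 * Real.exp (-z)) * Real.exp (-(2 * z) * s ^ 2)) :=
        (integrable_exp_neg_mul_sq (by linarith)).const_mul _
      refine hmaj.mono' hgcont.aestronglyMeasurable
        (Filter.Eventually.of_forall fun s => ?_)
      have hs1 : (0:ℝ) < Real.sqrt (1 + s ^ 2) := Real.sqrt_pos.2 (by positivity)
      rw [Real.norm_eq_abs, abs_of_nonneg (by positivity)]
      have h1 : Real.exp (-z * (1 + 2 * s ^ 2))
          = Real.exp (-z) * Real.exp (-(2 * z) * s ^ 2) := by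
        rw [← Real.exp_add,
          show -z + -(2 * z) * s ^ 2 = -z * (1 + 2 * s ^ 2) by ring]
      have h2 : (1:ℝ) ≤ Real.sqrt (1 + s ^ 2) :=
        (Real.le_sqrt' one_pos).2 (by nlinarith)
      show 2 * Real.exp (-z * (1 + 2 * s ^ 2)) / Real.sqrt (1 + s ^ 2)
          ≤ (2 * Real.exp (-z)) * Real.exp (-(2 * z) * s ^ 2)
      rw [h1, div_le_iff₀ hs1]
      calc 2 * (Real.exp (-z) * Real.exp (-(2 * z) * s ^ 2))
          = 2 * Real.exp (-z) * Real.exp (-(2 * z) * s ^ 2) * 1 := by ring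
        _ ≤ 2 * Real.exp (-z) * Real.exp (-(2 * z) * s ^ 2) * Real.sqrt (1 + s ^ 2) := by
            gcongr
    have hsub : (∫ t in Set.Ioi (0:ℝ), Real.exp (-z * Real.cosh t))
        = ∫ s in Set.Ioi (0:ℝ),
            2 * Real.exp (-z * (1 + 2 * s ^ 2)) / Real.sqrt (1 + s ^ 2) := by
      have hf : ContinuousOn (fun t : ℝ => Real.sinh (t / 2)) (Set.Ici 0) := by fun_prop
      have hft : Filter.Tendsto (fun t : ℝ => Real.sinh (t / 2)) Filter.atTop Filter.atTop := by
        apply Filter.tendsto_atTop_mono' _ _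
          (show Filter.Tendsto (fun t : ℝ => (Real.exp (t / 2) - 1) / 2)
            Filter.atTop Filter.atTop from ?_)
        · filter_upwards [Filter.eventually_ge_atTop (0:ℝ)] with t ht
          rw [Real.sinh_eq]
          have : Real.exp (-(t / 2)) ≤ 1 := Real.exp_le_one_iff.2 (by linarith)
          gcongr
        · apply Filter.Tendsto.atTop_div_const two_pos
          apply Filter.tendsto_atTop_add_const_right
          exact Real.tendsto_exp_atTop.comp
            (Filter.Tendsto.atTop_div_const two_pos Filter.tendsto_id)
      have hff' : ∀ x ∈ Set.Ioi (0:ℝ), HasDerivWithinAt (fun t : ℝ => Real.sinh (t / 2))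
          (Real.cosh (x / 2) / 2) (Set.Ioi x) x := by
        intro x hx
        have h : HasDerivAt (fun t : ℝ => Real.sinh (t / 2))
            (Real.cosh (x / 2) * (1 / 2)) x :=
          by have := (Real.hasDerivAt_sinh (x / 2)).comp x ((hasDerivAt_id' x).div_const 2); exact this
        have h2 : Real.cosh (x / 2) * (1 / 2) = Real.cosh (x / 2) / 2 := by ring
        rw [h2] at h
        exact h.hasDerivWithinAt
      have hg1 : IntegrableOn
          (fun s : ℝ => 2 * Real.exp (-z * (1 + 2 * s ^ 2)) / Real.sqrt (1 + s ^ 2))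
          ((fun t : ℝ => Real.sinh (t / 2)) '' Set.Ici 0) :=
        hgint.integrableOn
      have hg2 : IntegrableOn
          (fun t : ℝ =>
            ((fun s : ℝ => 2 * Real.exp (-z * (1 + 2 * s ^ 2)) / Real.sqrt (1 + s ^ 2)) ∘
              fun t : ℝ => Real.sinh (t / 2)) t * (Real.cosh (t / 2) / 2))
          (Set.Ici 0) := by
        have heq : (fun t : ℝ =>
            ((fun s : ℝ => 2 * Real.exp (-z * (1 + 2 * s ^ 2)) / Real.sqrt (1 + s ^ 2)) ∘
              fun t : ℝ => Real.sinh (t / 2)) t * (Real.cosh (t / 2) / 2))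
            = fun t => Real.exp (-z * Real.cosh t) := by
          funext t; exact key_subst z t
        rw [heq, integrableOn_Ici_iff_integrableOn_Ioi]
        exact h0int
      have hres := MeasureTheory.integral_comp_mul_deriv_Ioi hf hft hff'
        (hgcont.continuousOn) hg1 hg2
      rw [show Real.sinh ((0:ℝ) / 2) = 0 by simp] at hres
      rw [← hres]
      exact (setIntegral_congr_fun measurableSet_Ioi fun t ht => (key_subst z t).symm)
    -- multiply by exp z
    have hmul : (Real.exp z * ∫ s in Set.Ioi (0:ℝ),
          2 * Real.exp (-z * (1 + 2 * s ^ 2)) / Real.sqrt (1 + s ^ 2))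
        = ∫ s in Set.Ioi (0:ℝ), 2 * Real.exp (-(2 * z) * s ^ 2) / Real.sqrt (1 + s ^ 2) := by
      rw [← MeasureTheory.integral_const_mul]
      exact setIntegral_congr_fun measurableSet_Ioi fun s hs => exp_mul_g z s
    -- strict comparison with Gaussian
    have hφ1int : IntegrableOn
        (fun s : ℝ => 2 * Real.exp (-(2 * z) * s ^ 2) / Real.sqrt (1 + s ^ 2))
        (Set.Ioi (0:ℝ)) := by
      have heq : (fun s : ℝ => 2 * Real.exp (-(2 * z) * s ^ 2) / Real.sqrt (1 + s ^ 2))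
          = fun s => Real.exp z *
            (2 * Real.exp (-z * (1 + 2 * s ^ 2)) / Real.sqrt (1 + s ^ 2)) := by
        funext s; exact (exp_mul_g z s).symm
      rw [heq]
      exact (hgint.const_mul _).integrableOn
    have hφ2int : IntegrableOn
        (fun s : ℝ => 2 * Real.exp (-(2 * z + 1 / 2) * s ^ 2)) (Set.Ioi (0:ℝ)) :=
      ((integrable_exp_neg_mul_sq (by linarith)).const_mul 2).integrableOn
    have hgauss : (∫ s in Set.Ioi (0:ℝ), 2 * Real.exp (-(2 * z + 1 / 2) * s ^ 2))
        = Real.sqrt (π / (2 * z + 1 / 2)) := by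
      rw [MeasureTheory.integral_const_mul, integral_gaussian_Ioi]
      ring_nf
    have hstrict : (∫ s in Set.Ioi (0:ℝ), 2 * Real.exp (-(2 * z + 1 / 2) * s ^ 2))
        < ∫ s in Set.Ioi (0:ℝ), 2 * Real.exp (-(2 * z) * s ^ 2) / Real.sqrt (1 + s ^ 2) := by
      have hdiff : ∀ s : ℝ, 0 < s →
          0 < 2 * Real.exp (-(2 * z) * s ^ 2) / Real.sqrt (1 + s ^ 2)
            - 2 * Real.exp (-(2 * z + 1 / 2) * s ^ 2) := by
        intro s hs
        rw [gauss_eq_div z s, sub_pos]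
        exact div_lt_div_of_pos_left (by positivity) (Real.sqrt_pos.2 (by positivity))
          (sqrt_lt_exp_half_sq s hs.ne')
      have hnn : ∀ s : ℝ, 0 ≤ 2 * Real.exp (-(2 * z) * s ^ 2) / Real.sqrt (1 + s ^ 2)
            - 2 * Real.exp (-(2 * z + 1 / 2) * s ^ 2) := by
        intro s
        rw [gauss_eq_div z s, sub_nonneg]
        exact div_le_div_of_nonneg_left (by positivity) (Real.sqrt_pos.2 (by positivity))
          (sqrt_le_exp_half_sq s)
      rw [← sub_pos, ← MeasureTheory.integral_sub hφ1int hφ2int]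
      rw [MeasureTheory.setIntegral_pos_iff_support_of_nonneg_ae
        (Filter.Eventually.of_forall hnn) (hφ1int.sub hφ2int)]
      refine lt_of_lt_of_le ?_ (measure_mono (show Set.Ioi (0:ℝ) ⊆ _ ∩ Set.Ioi 0 from
        fun s hs => ⟨(hdiff s hs).ne', hs⟩))
      simp [Real.volume_Ioi]
    -- combine
    calc Real.sqrt (π / (2 * z + 1 / 2))
        = ∫ s in Set.Ioi (0:ℝ), 2 * Real.exp (-(2 * z + 1 / 2) * s ^ 2) := hgauss.symm
      _ < ∫ s in Set.Ioi (0:ℝ), 2 * Real.exp (-(2 * z) * s ^ 2) / Real.sqrt (1 + s ^ 2) :=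
          hstrict
      _ = Real.exp z * ∫ s in Set.Ioi (0:ℝ),
            2 * Real.exp (-z * (1 + 2 * s ^ 2)) / Real.sqrt (1 + s ^ 2) := hmul.symm
      _ = Real.exp z * ∫ t in Set.Ioi (0:ℝ), Real.exp (-z * Real.cosh t) := by rw [hsub]
      _ ≤ Real.exp z * besselK ν z := by
          apply mul_le_mul_of_nonneg_left hmono (Real.exp_pos z).le
  · -- lower bound on the sqrt
    have h2U : (2:ℝ) ≤ (2:ℝ) ^ (U + 1) := by
      calc (2:ℝ) = (2:ℝ) ^ (1:ℝ) := (Real.rpow_one 2).symm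
        _ ≤ (2:ℝ) ^ (U + 1) := by
            apply Real.rpow_le_rpow_left_iff (by norm_num : (1:ℝ) < 2) |>.2
            linarith
    have hπ : (3:ℝ) < π := by
      have := Real.pi_gt_d6
      linarith
    have hkey : 2 * z + 1 / 2 < π * (2:ℝ) ^ (U + 1) := by
      nlinarith
    have hpos : (0:ℝ) < 2 * z + 1 / 2 := by linarith
    have h1 : (2:ℝ) ^ (-(U + 1)) < π / (2 * z + 1 / 2) := by
      rw [Real.rpow_neg (by norm_num : (0:ℝ) ≤ 2), lt_div_iff₀ hpos, inv_mul_eq_div,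
        div_lt_iff₀ (by positivity : (0:ℝ) < (2:ℝ) ^ (U + 1))]
      linarith
    have h2 : (2:ℝ) ^ (-(U + 1) / 2) = Real.sqrt ((2:ℝ) ^ (-(U + 1))) := by
      rw [Real.sqrt_eq_rpow, ← Real.rpow_mul (by norm_num : (0:ℝ) ≤ 2)]
      ring_nf
    rw [gt_iff_lt, h2]
    exact Real.sqrt_lt_sqrt (Real.rpow_nonneg (by norm_num) _) h1
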